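/- On the region of phase space where H < 0 and r ≠ 0, the rescaled Runge–Lenz vector A = M/√(−2H) together with L satisfies {L_i, L_j} = ε_{ijk} L_k, {L_i, A_j} = ε_{ijk} A_k, and {A_i, A_j} = ε_{ijk} L_k; hence (L, A) spans a Poisson-bracket realization of the Lie algebra so(4). -/

import Mathlib

noncomputable section
set_option maxHeartbeats 1000000


/-- Phase space ℝ³ × ℝ³ with coordinates (r, p). -/
abbrev Phase := (Fin 3 → ℝ) × (Fin 3 → ℝ)

/-- The standard Poisson bracket {f,g} = Σ_k (∂f/∂r_k ∂g/∂p_k − ∂f/∂p_k ∂g/∂r_k). -/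
def pb (f g : Phase → ℝ) (x : Phase) : ℝ :=
  ∑ k : Fin 3,
    (fderiv ℝ f x (Pi.single k 1, 0) * fderiv ℝ g x (0, Pi.single k 1)
      - fderiv ℝ f x (0, Pi.single k 1) * fderiv ℝ g x (Pi.single k 1, 0))

/-- The Levi-Civita symbol on Fin 3. -/
def eps (i j k : Fin 3) : ℝ :=
  if (i, j, k) ∈ [((0 : Fin 3), (1 : Fin 3), (2 : Fin 3)), (1, 2, 0), (2, 0, 1)] then 1
  else if (i, j, k) ∈ [((0 : Fin 3), (2 : Fin 3), (1 : Fin 3)), (2, 1, 0), (1, 0, 2)] then -1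
  else 0

/-- Euclidean norm on ℝ³. -/
def eucNorm (v : Fin 3 → ℝ) : ℝ := Real.sqrt (∑ k : Fin 3, v k ^ 2)

/-- Euclidean dot product on ℝ³. -/
def edot (v w : Fin 3 → ℝ) : ℝ := ∑ k : Fin 3, v k * w k

/-- Angular momentum L_i = ε_{ijk} r_j p_k. -/
def angL (i : Fin 3) (x : Phase) : ℝ :=
  ∑ j : Fin 3, ∑ k : Fin 3, eps i j k * x.1 j * x.2 k

/-- The Kepler Hamiltonian H = |p|²/2 − 1/|r|. -/
def ham (x : Phase) : ℝ := (∑ k : Fin 3, x.2 k ^ 2) / 2 - 1 / eucNorm x.1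

/-- The Runge–Lenz vector M = p × L − r/|r|. -/
def rlM (i : Fin 3) (x : Phase) : ℝ :=
  (∑ j : Fin 3, ∑ k : Fin 3, eps i j k * x.2 j * angL k x) - x.1 i / eucNorm x.1

/-- The rescaled Runge–Lenz vector A = M/√(−2H) for negative energy. -/
def rlA (i : Fin 3) (x : Phase) : ℝ := rlM i x / Real.sqrt (-2 * ham x)

@[simp] lemma eps000 : eps 0 0 0 = 0 := by unfold eps; rw [if_neg (by decide), if_neg (by decide)]
@[simp] lemma eps001 : eps 0 0 1 = 0 := by unfold eps; rw [if_neg (by decide), if_neg (by decide)]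
@[simp] lemma eps002 : eps 0 0 2 = 0 := by unfold eps; rw [if_neg (by decide), if_neg (by decide)]
@[simp] lemma eps010 : eps 0 1 0 = 0 := by unfold eps; rw [if_neg (by decide), if_neg (by decide)]
@[simp] lemma eps011 : eps 0 1 1 = 0 := by unfold eps; rw [if_neg (by decide), if_neg (by decide)]
@[simp] lemma eps012 : eps 0 1 2 = 1 := by unfold eps; rw [if_pos (by decide)]
@[simp] lemma eps020 : eps 0 2 0 = 0 := by unfold eps; rw [if_neg (by decide), if_neg (by decide)]
@[simp] lemma eps021 : eps 0 2 1 = -1 := by unfold eps; rw [if_neg (by decide), if_pos (by decide)]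
@[simp] lemma eps022 : eps 0 2 2 = 0 := by unfold eps; rw [if_neg (by decide), if_neg (by decide)]
@[simp] lemma eps100 : eps 1 0 0 = 0 := by unfold eps; rw [if_neg (by decide), if_neg (by decide)]
@[simp] lemma eps101 : eps 1 0 1 = 0 := by unfold eps; rw [if_neg (by decide), if_neg (by decide)]
@[simp] lemma eps102 : eps 1 0 2 = -1 := by unfold eps; rw [if_neg (by decide), if_pos (by decide)]
@[simp] lemma eps110 : eps 1 1 0 = 0 := by unfold eps; rw [if_neg (by decide), if_neg (by decide)]
@[simp] lemma eps111 : eps 1 1 1 = 0 := by unfold eps; rw [if_neg (by decide), if_neg (by decide)]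
@[simp] lemma eps112 : eps 1 1 2 = 0 := by unfold eps; rw [if_neg (by decide), if_neg (by decide)]
@[simp] lemma eps120 : eps 1 2 0 = 1 := by unfold eps; rw [if_pos (by decide)]
@[simp] lemma eps121 : eps 1 2 1 = 0 := by unfold eps; rw [if_neg (by decide), if_neg (by decide)]
@[simp] lemma eps122 : eps 1 2 2 = 0 := by unfold eps; rw [if_neg (by decide), if_neg (by decide)]
@[simp] lemma eps200 : eps 2 0 0 = 0 := by unfold eps; rw [if_neg (by decide), if_neg (by decide)]
@[simp] lemma eps201 : eps 2 0 1 = 1 := by unfold eps; rw [if_pos (by decide)]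
@[simp] lemma eps202 : eps 2 0 2 = 0 := by unfold eps; rw [if_neg (by decide), if_neg (by decide)]
@[simp] lemma eps210 : eps 2 1 0 = -1 := by unfold eps; rw [if_neg (by decide), if_pos (by decide)]
@[simp] lemma eps211 : eps 2 1 1 = 0 := by unfold eps; rw [if_neg (by decide), if_neg (by decide)]
@[simp] lemma eps212 : eps 2 1 2 = 0 := by unfold eps; rw [if_neg (by decide), if_neg (by decide)]
@[simp] lemma eps220 : eps 2 2 0 = 0 := by unfold eps; rw [if_neg (by decide), if_neg (by decide)]
@[simp] lemma eps221 : eps 2 2 1 = 0 := by unfold eps; rw [if_neg (by decide), if_neg (by decide)]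
@[simp] lemma eps222 : eps 2 2 2 = 0 := by unfold eps; rw [if_neg (by decide), if_neg (by decide)]
def RC (k : Fin 3) : Phase →L[ℝ] ℝ :=
  (ContinuousLinearMap.proj k).comp (ContinuousLinearMap.fst ℝ (Fin 3 → ℝ) (Fin 3 → ℝ))
def PC (k : Fin 3) : Phase →L[ℝ] ℝ :=
  (ContinuousLinearMap.proj k).comp (ContinuousLinearMap.snd ℝ (Fin 3 → ℝ) (Fin 3 → ℝ))

@[simp] lemma RC_r (k : Fin 3) (v : Fin 3 → ℝ) : RC k (v, 0) = v k := by simp [RC]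
@[simp] lemma RC_p (k : Fin 3) (v : Fin 3 → ℝ) : RC k ((0 : Fin 3 → ℝ), v) = 0 := by simp [RC]
@[simp] lemma PC_r (k : Fin 3) (v : Fin 3 → ℝ) : PC k (v, (0 : Fin 3 → ℝ)) = 0 := by simp [PC]
@[simp] lemma PC_p (k : Fin 3) (v : Fin 3 → ℝ) : PC k ((0 : Fin 3 → ℝ), v) = v k := by simp [PC]

def DL (i : Fin 3) (x : Phase) : Phase →L[ℝ] ℝ :=
  ∑ j : Fin 3, ∑ l : Fin 3, ((eps i j l * x.1 j) • PC l + x.2 l • (eps i j l • RC j))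

lemma hasDL (i : Fin 3) (x : Phase) : HasFDerivAt (angL i) (DL i x) x := by
  unfold angL DL
  exact HasFDerivAt.fun_sum fun j _ => HasFDerivAt.fun_sum fun l _ =>
    ((RC j).hasFDerivAt.const_mul (eps i j l)).mul (PC l).hasFDerivAt

lemma DL_r (i k : Fin 3) (x : Phase) :
    DL i x (Pi.single k 1, 0) = ∑ l : Fin 3, eps i k l * x.2 l := by
  simp [DL, ContinuousLinearMap.sum_apply, Pi.single_apply, Fin.sum_univ_three,
    mul_comm]
  fin_cases k <;> simp <;> ring

lemma DL_p (i k : Fin 3) (x : Phase) :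
    DL i x (0, Pi.single k 1) = ∑ j : Fin 3, eps i j k * x.1 j := by
  simp [DL, ContinuousLinearMap.sum_apply, Pi.single_apply, Fin.sum_univ_three]
  fin_cases k <;> simp <;> ring

lemma pb_LL (i j : Fin 3) (x : Phase) :
    pb (angL i) (angL j) x = ∑ k : Fin 3, eps i j k * angL k x := by
  unfold pb
  simp only [(hasDL i x).fderiv, (hasDL j x).fderiv, DL_r, DL_p, angL, Fin.sum_univ_three]
  fin_cases i <;> fin_cases j <;> simp <;> ring

lemma sumsq_pos {x : Phase} (hx : x.1 ≠ 0) : 0 < ∑ k : Fin 3, x.1 k ^ 2 := by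
  obtain ⟨m, hm⟩ := Function.ne_iff.mp hx
  exact Finset.sum_pos' (fun k _ => sq_nonneg _) ⟨m, Finset.mem_univ m, pow_two_pos_of_ne_zero hm⟩

lemma eucNorm_pos {x : Phase} (hx : x.1 ≠ 0) : 0 < eucNorm x.1 :=
  Real.sqrt_pos.mpr (sumsq_pos hx)

lemma eucNorm_sq {x : Phase} (hx : x.1 ≠ 0) :
    eucNorm x.1 ^ 2 = x.1 0 ^ 2 + x.1 1 ^ 2 + x.1 2 ^ 2 := by
  rw [eucNorm, Real.sq_sqrt (sumsq_pos hx).le, Fin.sum_univ_three]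

def DQ (x : Phase) : Phase →L[ℝ] ℝ := ∑ k : Fin 3, (x.1 k • RC k + x.1 k • RC k)

lemma hasDQ (x : Phase) : HasFDerivAt (fun y : Phase => ∑ k : Fin 3, y.1 k ^ 2) (DQ x) x := by
  simp only [pow_two]
  exact HasFDerivAt.fun_sum fun k _ => (RC k).hasFDerivAt.mul (RC k).hasFDerivAt

def Dn (x : Phase) : Phase →L[ℝ] ℝ := (1 / (2 * eucNorm x.1)) • DQ x

lemma hasDn {x : Phase} (hx : x.1 ≠ 0) : HasFDerivAt (fun y : Phase => eucNorm y.1) (Dn x) x :=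
  (Real.hasDerivAt_sqrt (sumsq_pos hx).ne').comp_hasFDerivAt x (hasDQ x)

def Dinv (x : Phase) : Phase →L[ℝ] ℝ := (-(eucNorm x.1 ^ 2)⁻¹) • Dn x

lemma hasDinv {x : Phase} (hx : x.1 ≠ 0) :
    HasFDerivAt (fun y : Phase => (eucNorm y.1)⁻¹) (Dinv x) x :=
  (hasDerivAt_inv (eucNorm_pos hx).ne').comp_hasFDerivAt x (hasDn hx)

def Dham (x : Phase) : Phase →L[ℝ] ℝ :=
  (1 / 2 : ℝ) • (∑ k : Fin 3, (x.2 k • PC k + x.2 k • PC k)) - Dinv x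

lemma hasDham {x : Phase} (hx : x.1 ≠ 0) : HasFDerivAt ham (Dham x) x := by
  have hfun : ham = fun y : Phase =>
      (1 / 2 : ℝ) * (∑ k : Fin 3, y.2 k * y.2 k) - (eucNorm y.1)⁻¹ := by
    funext y; simp [ham, pow_two, one_div]; ring
  rw [hfun]
  exact ((HasFDerivAt.fun_sum fun k _ =>
    (PC k).hasFDerivAt.mul (PC k).hasFDerivAt).const_mul (1/2)).sub (hasDinv hx)

def DM (i : Fin 3) (x : Phase) : Phase →L[ℝ] ℝ :=
  (∑ j : Fin 3, ∑ l : Fin 3,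
    ((eps i j l * x.2 j) • DL l x + angL l x • (eps i j l • PC j)))
  - (x.1 i • Dinv x + (eucNorm x.1)⁻¹ • RC i)

lemma hasDM (i : Fin 3) {x : Phase} (hx : x.1 ≠ 0) : HasFDerivAt (rlM i) (DM i x) x := by
  have hfun : rlM i = fun y : Phase =>
      (∑ j : Fin 3, ∑ l : Fin 3, eps i j l * y.2 j * angL l y) - y.1 i * (eucNorm y.1)⁻¹ := by
    funext y; rw [rlM, div_eq_mul_inv]
  rw [hfun]
  exact (HasFDerivAt.fun_sum fun j _ => HasFDerivAt.fun_sum fun l _ =>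
    ((PC j).hasFDerivAt.const_mul (eps i j l)).mul (hasDL l x)).sub
    ((RC i).hasFDerivAt.mul (hasDinv hx))
lemma DQ_r (x : Phase) (k : Fin 3) : DQ x (Pi.single k 1, 0) = 2 * x.1 k := by
  simp [DQ, ContinuousLinearMap.sum_apply, Fin.sum_univ_three, Pi.single_apply]
  fin_cases k <;> simp <;> ring

lemma DQ_p (x : Phase) (k : Fin 3) : DQ x (0, Pi.single k 1) = 0 := by
  simp [DQ, ContinuousLinearMap.sum_apply]

lemma Dinv_r {x : Phase} (hx : x.1 ≠ 0) (k : Fin 3) :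
    Dinv x (Pi.single k 1, 0) = -(x.1 k) / eucNorm x.1 ^ 3 := by
  have hn := (eucNorm_pos hx).ne'
  simp [Dinv, Dn, DQ_r]
  field_simp

lemma Dinv_p (x : Phase) (k : Fin 3) : Dinv x (0, Pi.single k 1) = 0 := by
  simp [Dinv, Dn, DQ_p]

lemma Dham_r {x : Phase} (hx : x.1 ≠ 0) (k : Fin 3) :
    Dham x (Pi.single k 1, 0) = x.1 k / eucNorm x.1 ^ 3 := by
  have hn := (eucNorm_pos hx).ne'
  simp [Dham, ContinuousLinearMap.sum_apply, Dinv_r hx]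
  field_simp

lemma Dham_p (x : Phase) (k : Fin 3) : Dham x (0, Pi.single k 1) = x.2 k := by
  simp [Dham, ContinuousLinearMap.sum_apply, Dinv_p, Fin.sum_univ_three, Pi.single_apply]
  fin_cases k <;> simp <;> ring

lemma DM_r (i : Fin 3) {x : Phase} (hx : x.1 ≠ 0) (k : Fin 3) :
    DM i x (Pi.single k 1, 0) =
      (∑ j : Fin 3, ∑ l : Fin 3, eps i j l * x.2 j * ∑ m : Fin 3, eps l k m * x.2 m)
        + x.1 i * x.1 k / eucNorm x.1 ^ 3 - (if i = k then (1:ℝ) else 0) / eucNorm x.1 := by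
  have hn := (eucNorm_pos hx).ne'
  simp [DM, ContinuousLinearMap.sum_apply, DL_r, Dinv_r hx, Pi.single_apply]
  fin_cases i <;> fin_cases k <;> simp [Fin.sum_univ_three] <;> field_simp <;> ring

lemma DM_p (i : Fin 3) {x : Phase} (hx : x.1 ≠ 0) (k : Fin 3) :
    DM i x (0, Pi.single k 1) =
      (∑ l : Fin 3, eps i k l * angL l x)
        + ∑ j : Fin 3, ∑ l : Fin 3, eps i j l * x.2 j * ∑ m : Fin 3, eps l m k * x.1 m := by
  simp [DM, ContinuousLinearMap.sum_apply, DL_p, Dinv_p, Pi.single_apply]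
  fin_cases i <;> fin_cases k <;> simp [Fin.sum_univ_three] <;> ring

lemma pb_LH (i : Fin 3) {x : Phase} (hx : x.1 ≠ 0) : pb (angL i) ham x = 0 := by
  have hn := (eucNorm_pos hx).ne'
  unfold pb
  simp only [(hasDL i x).fderiv, (hasDham hx).fderiv, DL_r, DL_p, Dham_r hx, Dham_p,
    Fin.sum_univ_three]
  fin_cases i <;> simp <;> field_simp <;> ring

lemma pb_LM (i j : Fin 3) {x : Phase} (hx : x.1 ≠ 0) :
    pb (angL i) (rlM j) x = ∑ k : Fin 3, eps i j k * rlM k x := by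
  have hn := (eucNorm_pos hx).ne'
  unfold pb
  simp only [(hasDL i x).fderiv, (hasDM j hx).fderiv, DL_r, DL_p, DM_r j hx, DM_p j hx,
    Fin.sum_univ_three, rlM, angL]
  fin_cases i <;> fin_cases j <;> simp <;> field_simp <;> ring

lemma pb_MH (i : Fin 3) {x : Phase} (hx : x.1 ≠ 0) : pb (rlM i) ham x = 0 := by
  have hn := (eucNorm_pos hx).ne'
  have h2 := eucNorm_sq hx
  unfold pb
  simp only [(hasDM i hx).fderiv, (hasDham hx).fderiv, DM_r i hx, DM_p i hx, Dham_r hx, Dham_p,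
    Fin.sum_univ_three, angL]
  fin_cases i <;> simp <;> field_simp
  · linear_combination ((-1) * x.2 0) * h2
  · linear_combination ((-1) * x.2 1) * h2
  · linear_combination ((-1) * x.2 2) * h2

lemma pb_MM (i j : Fin 3) {x : Phase} (hx : x.1 ≠ 0) :
    pb (rlM i) (rlM j) x = (-2 * ham x) * ∑ k : Fin 3, eps i j k * angL k x := by
  have hn := (eucNorm_pos hx).ne'
  have h2 := eucNorm_sq hx
  unfold pb
  simp only [(hasDM i hx).fderiv, (hasDM j hx).fderiv, DM_r i hx, DM_p i hx, DM_r j hx, DM_p j hx,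
    Fin.sum_univ_three, angL, ham]
  fin_cases i <;> fin_cases j <;> simp <;> field_simp
  · linear_combination (0) * h2
  · linear_combination ((-1) * x.1 1 * x.2 0 + (1) * x.1 0 * x.2 1) * h2
  · linear_combination ((1) * x.1 0 * x.2 2 + (-1) * x.1 2 * x.2 0) * h2
  · linear_combination ((1) * x.1 1 * x.2 0 + (-1) * x.1 0 * x.2 1) * h2
  · linear_combination (0) * h2
  · linear_combination ((-1) * x.1 2 * x.2 1 + (1) * x.1 1 * x.2 2) * h2
  · linear_combination ((-1) * x.1 0 * x.2 2 + (1) * x.1 2 * x.2 0) * h2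
  · linear_combination ((1) * x.1 2 * x.2 1 + (-1) * x.1 1 * x.2 2) * h2
  · linear_combination (0) * h2
lemma pb_HH (x : Phase) : pb ham ham x = 0 := by
  unfold pb; exact Finset.sum_eq_zero fun k _ => by ring


/-- On {H < 0, r ≠ 0}: {L_i, L_j} = ε_{ijk} L_k, {L_i, A_j} = ε_{ijk} A_k,
    {A_i, A_j} = ε_{ijk} L_k — a Poisson realization of so(4). -/
theorem so4_realization (i j : Fin 3) (x : Phase) (hx : x.1 ≠ 0) (hH : ham x < 0) :
    pb (angL i) (angL j) x = ∑ k : Fin 3, eps i j k * angL k x ∧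
    pb (angL i) (rlA j) x = ∑ k : Fin 3, eps i j k * rlA k x ∧
    pb (rlA i) (rlA j) x = ∑ k : Fin 3, eps i j k * angL k x := by
  have h2H : (0:ℝ) < -2 * ham x := by linarith
  set s : ℝ := Real.sqrt (-2 * ham x) with hs_def
  have hs : 0 < s := Real.sqrt_pos.mpr h2H
  have hs2 : s ^ 2 = -2 * ham x := Real.sq_sqrt h2H.le
  have hminus : HasFDerivAt (fun y : Phase => (-2:ℝ) * ham y) ((-2:ℝ) • Dham x) x :=
    (hasDham hx).const_mul (-2)
  have hsq : HasFDerivAt (fun y : Phase => Real.sqrt (-2 * ham y))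
      ((1 / (2 * s)) • ((-2:ℝ) • Dham x)) x :=
    (Real.hasDerivAt_sqrt h2H.ne').comp_hasFDerivAt x hminus
  have hg : HasFDerivAt (fun y : Phase => (Real.sqrt (-2 * ham y))⁻¹)
      ((-(s ^ 2)⁻¹) • ((1 / (2 * s)) • ((-2:ℝ) • Dham x))) x :=
    (hasDerivAt_inv hs.ne').comp_hasFDerivAt x hsq
  have hA : ∀ m : Fin 3, HasFDerivAt (rlA m)
      (rlM m x • ((-(s ^ 2)⁻¹) • ((1 / (2 * s)) • ((-2:ℝ) • Dham x))) + s⁻¹ • DM m x) x := by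
    intro m
    have hfun : rlA m = fun y : Phase => rlM m y * (Real.sqrt (-2 * ham y))⁻¹ := by
      funext y; rw [rlA, div_eq_mul_inv]
    rw [hfun]
    exact (hasDM m hx).mul hg
  refine ⟨pb_LL i j x, ?_, ?_⟩
  · have e1 : pb (angL i) (rlA j) x = s⁻¹ * pb (angL i) (rlM j) x
        + (rlM j x * (-(s ^ 2)⁻¹) * (1 / (2 * s)) * (-2)) * pb (angL i) ham x := by
      unfold pb
      simp only [(hA j).fderiv, (hasDL i x).fderiv, (hasDM j hx).fderiv, (hasDham hx).fderiv,
        ContinuousLinearMap.add_apply, ContinuousLinearMap.smul_apply, smul_eq_mul,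
        Fin.sum_univ_three]
      ring
    rw [e1, pb_LM i j hx, pb_LH i hx]
    simp only [rlA, ← hs_def, Fin.sum_univ_three]
    field_simp
    ring
  · have e2 : pb (rlA i) (rlA j) x = s⁻¹ * s⁻¹ * pb (rlM i) (rlM j) x
        + (rlM j x * (-(s ^ 2)⁻¹) * (1 / (2 * s)) * (-2)) * s⁻¹ * pb (rlM i) ham x
        - (rlM i x * (-(s ^ 2)⁻¹) * (1 / (2 * s)) * (-2)) * s⁻¹ * pb (rlM j) ham x
        + (rlM i x * (-(s ^ 2)⁻¹) * (1 / (2 * s)) * (-2))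
          * (rlM j x * (-(s ^ 2)⁻¹) * (1 / (2 * s)) * (-2)) * pb ham ham x := by
      unfold pb
      simp only [(hA i).fderiv, (hA j).fderiv, (hasDM i hx).fderiv, (hasDM j hx).fderiv,
        (hasDham hx).fderiv, ContinuousLinearMap.add_apply, ContinuousLinearMap.smul_apply,
        smul_eq_mul, Fin.sum_univ_three]
      ring
    rw [e2, pb_MM i j hx, pb_MH i hx, pb_MH j hx, pb_HH]
    have hT : s⁻¹ * s⁻¹ * ((-2 * ham x) * (∑ k : Fin 3, eps i j k * angL k x))
        = ∑ k : Fin 3, eps i j k * angL k x := by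
      rw [← hs2]; field_simp
    linarith [hT]
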